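/- Let X^n be a random vector on {0,1}^n and for t ∈ [0,1] let Y^n(t) be the output of X^n through a memoryless binary erasure channel with erasure probability 1-t (each coordinate is revealed independently with probability t, otherwise replaced by an erasure symbol). Then the map t ↦ I(X^n; Y^n(t))/t is non-increasing on (0,1]. -/

import Mathlib

open Finset

/-- Shannon entropy (in bits) of a pmf on a finite type (convention `0·log 0 = 0`
holds since `Real.logb 2 0 = 0`). -/
noncomputable def H2 {α : Type*} [Fintype α] (p : α → ℝ) : ℝ :=
  -∑ x, p x * Real.logb 2 (p x)

/-- `p` is a probability mass function. -/
def IsPMF {α : Type*} [Fintype α] (p : α → ℝ) : Prop :=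
  (∀ x, 0 ≤ p x) ∧ ∑ x, p x = 1

/-- Left marginal of a joint pmf. -/
noncomputable def margL {α β : Type*} [Fintype α] [Fintype β] (p : α × β → ℝ) : α → ℝ :=
  fun a => ∑ b, p (a, b)

/-- Right marginal of a joint pmf. -/
noncomputable def margR {α β : Type*} [Fintype α] [Fintype β] (p : α × β → ℝ) : β → ℝ :=
  fun b => ∑ a, p (a, b)

/-- Mutual information (in bits) of a joint pmf: `I = H(X) + H(Y) - H(X,Y)`. -/
noncomputable def MI {α β : Type*} [Fintype α] [Fintype β] (p : α × β → ℝ) : ℝ :=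
  H2 (margL p) + H2 (margR p) - H2 p

/-- Binary erasure channel on `Bool` with survival probability `t`
(erasure probability `1 - t`); `none` is the erasure symbol. -/
noncomputable def becW (t : ℝ) (x : Bool) : Option Bool → ℝ :=
  fun y => match y with
  | none => 1 - t
  | some b => if b = x then t else 0


namespace BEC

lemma sum_pi_prod {ι κ : Type*} [Fintype ι] [Fintype κ] [DecidableEq ι]
    (g : ι → κ → ℝ) : ∑ f : ι → κ, ∏ i, g i (f i) = ∏ i, ∑ c, g i c := by
  rw [Finset.prod_univ_sum (fun _ => (univ : Finset κ)) g, Fintype.piFinset_univ]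

noncomputable def W {n : ℕ} (t : ℝ) (σ : Fin n → Bool) : ℝ :=
  ∏ i, if σ i then t else 1 - t

noncomputable def q {n : ℕ} (p : (Fin n → Bool) → ℝ) (σ : Fin n → Bool)
    (x : Fin n → Bool) : ℝ :=
  ∑ x', p x' * ∏ i, (if σ i then (if x' i = x i then (1:ℝ) else 0) else 1)

noncomputable def Hq {n : ℕ} (p : (Fin n → Bool) → ℝ) (σ : Fin n → Bool) : ℝ :=
  -∑ x, p x * Real.logb 2 (q p σ x)

variable {n : ℕ} {p : (Fin n → Bool) → ℝ}

lemma W_nonneg {t : ℝ} (h0 : 0 ≤ t) (h1 : t ≤ 1) (σ : Fin n → Bool) : 0 ≤ W t σ :=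
  Finset.prod_nonneg (fun i _ => by split <;> linarith)

lemma q_nonneg (hp : ∀ x, 0 ≤ p x) (σ x : Fin n → Bool) : 0 ≤ q p σ x :=
  Finset.sum_nonneg fun x' _ => mul_nonneg (hp x')
    (Finset.prod_nonneg fun i _ => by split <;> [skip; norm_num] <;> split <;> norm_num)

lemma q_ge (hp : ∀ x, 0 ≤ p x) (σ x : Fin n → Bool) : p x ≤ q p σ x := by
  have : p x * ∏ i, (if σ i then (if x i = x i then (1:ℝ) else 0) else 1) = p x := by
    simp
  calc p x = p x * ∏ i, (if σ i then (if x i = x i then (1:ℝ) else 0) else 1) := this.symm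
    _ ≤ q p σ x := Finset.single_le_sum (f := fun x' => p x' *
        ∏ i, (if σ i then (if x' i = x i then (1:ℝ) else 0) else 1))
        (fun x' _ => mul_nonneg (hp x')
          (Finset.prod_nonneg fun i _ => by split <;> [skip; norm_num] <;> split <;> norm_num))
        (mem_univ x)

lemma q_pos (hp : ∀ x, 0 ≤ p x) {σ x} (hx : 0 < p x) : 0 < q p σ x :=
  lt_of_lt_of_le hx (q_ge hp σ x)

/-- `q` depends on `x` only through coordinates in `σ`. -/
lemma q_congr {σ x z : Fin n → Bool} (h : ∀ i, σ i = true → x i = z i) :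
    q p σ x = q p σ z := by
  unfold q
  refine Finset.sum_congr rfl fun x' _ => ?_
  congr 1
  refine Finset.prod_congr rfl fun i _ => ?_
  by_cases hs : σ i
  · simp [hs, h i hs]
  · simp [hs]

lemma q_bot (hp1 : ∑ x, p x = 1) (x : Fin n → Bool) :
    q p (fun _ => false) x = 1 := by
  unfold q; simpa using hp1

lemma Hq_bot (hp1 : ∑ x, p x = 1) : Hq p (fun _ => false) = 0 := by
  unfold Hq; simp [q_bot hp1]

/-- `q` is antitone in `σ`. -/
lemma q_anti (hp : ∀ x, 0 ≤ p x) {σ τ : Fin n → Bool}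
    (h : ∀ i, σ i = true → τ i = true) (x : Fin n → Bool) :
    q p τ x ≤ q p σ x := by
  refine Finset.sum_le_sum fun x' _ => ?_
  refine mul_le_mul_of_nonneg_left ?_ (hp x')
  refine Finset.prod_le_prod (fun i _ => by split <;> [skip; norm_num] <;> split <;> norm_num)
    (fun i _ => ?_)
  by_cases hs : σ i
  · simp only [hs, h i hs, if_true]; exact le_refl _
  · simp only [hs, if_false]
    split
    · split <;> norm_num
    · exact le_refl 1


lemma q_split {σ z : Fin n → Bool} {k : Fin n} (hk : σ k = false) :
    q p (Function.update σ k true) (Function.update z k false)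
      + q p (Function.update σ k true) (Function.update z k true) = q p σ z := by
  unfold q
  rw [← Finset.sum_add_distrib]
  refine Finset.sum_congr rfl fun x' _ => ?_
  rw [← mul_add]; congr 1
  have h1 : ∀ (b : Bool), (∏ i, (if Function.update σ k true i then
        (if x' i = Function.update z k b i then (1:ℝ) else 0) else 1))
      = (if x' k = b then (1:ℝ) else 0) *
        ∏ i ∈ univ.erase k, (if σ i then (if x' i = z i then (1:ℝ) else 0) else 1) := by
    intro b
    rw [← Finset.mul_prod_erase univ _ (mem_univ k)]
    congr 1
    · simp
    · refine Finset.prod_congr rfl fun i hi => ?_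
      have hik : i ≠ k := (Finset.mem_erase.1 hi).1
      simp [Function.update_of_ne hik]
  rw [h1 false, h1 true, ← add_mul,
    ← Finset.mul_prod_erase univ _ (mem_univ k), hk]
  cases hxk : x' k <;> simp [hxk]

lemma fiber_mass (σ z : Fin n → Bool) :
    (∑ x, if (fun i => σ i && x i) = z then p x else 0)
      = if (fun i => σ i && z i) = z then q p σ z else 0 := by
  by_cases hz : (fun i => σ i && z i) = z
  · rw [if_pos hz]
    unfold q
    refine Finset.sum_congr rfl fun x _ => ?_
    have hprod : (∏ i, (if σ i then (if x i = z i then (1:ℝ) else 0) else 1))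
        = if (∀ i, σ i = true → x i = z i) then (1:ℝ) else 0 := by
      have hb := Finset.prod_boole (p := fun i => σ i = true → x i = z i)
        (s := (univ : Finset (Fin n))) (M₀ := ℝ)
      simp only [mem_univ, true_implies] at hb
      rw [← hb]
      refine Finset.prod_congr rfl fun i _ => ?_
      by_cases hs : σ i = true
      · by_cases hx : x i = z i <;> simp [hs, hx]
      · simp [hs]
    rw [hprod]
    have hc : ((fun i => σ i && x i) = z) ↔ (∀ i, σ i = true → x i = z i) := by
      rw [funext_iff]
      constructor
      · intro h i hs
        have := h i; rw [hs, Bool.true_and] at this; exact this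
      · intro h i
        have hzi := congrFun hz i
        by_cases hs : σ i = true
        · rw [hs, Bool.true_and, h i hs]
        · have hs' : σ i = false := by simpa using hs
          rw [hs', Bool.false_and] at hzi ⊢
          exact hzi
    by_cases hcond : (fun i => σ i && x i) = z
    · rw [if_pos hcond, if_pos (hc.1 hcond), mul_one]
    · rw [if_neg hcond, if_neg (fun h => hcond (hc.2 h)), mul_zero]
  · rw [if_neg hz]
    refine Finset.sum_eq_zero fun x _ => ?_
    rw [if_neg]
    intro h
    apply hz
    funext i
    have hi := congrFun h i
    rw [← hi, ← Bool.and_assoc, Bool.and_self]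

lemma sum_q_mask (hp1 : ∑ x, p x = 1) (σ : Fin n → Bool) :
    (∑ z, if (fun i => σ i && z i) = z then q p σ z else 0) = 1 := by
  have : ∀ z : Fin n → Bool, (if (fun i => σ i && z i) = z then q p σ z else 0)
      = ∑ x, if (fun i => σ i && x i) = z then p x else 0 :=
    fun z => (fiber_mass σ z).symm
  rw [Finset.sum_congr rfl fun z _ => this z, Finset.sum_comm]
  rw [← hp1]
  refine Finset.sum_congr rfl fun x _ => ?_
  simpa using Finset.sum_ite_eq univ (fun i => σ i && x i) (fun _ => p x)

lemma flip_involutive (k : Fin n) :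
    Function.Involutive (fun z : Fin n → Bool => Function.update z k (!(z k))) := by
  intro z
  funext i
  by_cases h : i = k
  · subst h; simp
  · simp [Function.update_of_ne h]

lemma mask_cond_k {γ z : Fin n → Bool} {k : Fin n} (hγ : γ k = false) (hzk : z k = false) :
    ((fun i => Function.update γ k true i && Function.update z k true i)
      = Function.update z k true) ↔ ((fun i => γ i && z i) = z) := by
  constructor
  · intro h
    funext i
    by_cases hik : i = k
    · subst hik; rw [hγ, hzk]; rfl
    · have := congrFun h i
      simp only [Function.update_of_ne hik] at this
      exact this
  · intro h
    funext i
    by_cases hik : i = k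
    · subst hik; simp
    · simp only [Function.update_of_ne hik]
      exact congrFun h i

lemma mask_k_false {γ z : Fin n → Bool} {k : Fin n} (hγ : γ k = false)
    (h : (fun i => γ i && z i) = z) : z k = false := by
  have := congrFun h k
  rw [hγ, Bool.false_and] at this
  exact this.symm

lemma pair_split {γ : Fin n → Bool} {k : Fin n} (hγ : γ k = false)
    (F : (Fin n → Bool) → ℝ) :
    (∑ z, if (fun i => Function.update γ k true i && z i) = z then F z else 0)
    = ∑ z, if (fun i => γ i && z i) = z
        then F z + F (Function.update z k true) else 0 := by
  have hsplit : ∀ z : Fin n → Bool,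
      (if (fun i => Function.update γ k true i && z i) = z then F z else 0)
      = (if (fun i => γ i && z i) = z then F z else 0)
        + (if ((fun i => Function.update γ k true i && z i) = z ∧ z k = true)
            then F z else 0) := by
    intro z
    by_cases hzk : z k = true
    · have hng : ¬ ((fun i => γ i && z i) = z) := by
        intro h; rw [mask_k_false hγ h] at hzk; exact absurd hzk (by simp)
      rw [if_neg hng, zero_add]
      by_cases hc : (fun i => Function.update γ k true i && z i) = z
      · rw [if_pos hc, if_pos ⟨hc, hzk⟩]
      · rw [if_neg hc, if_neg (fun h => hc h.1)]
    · have hzf : z k = false := by simpa using hzk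
      have hiff : ((fun i => Function.update γ k true i && z i) = z)
          ↔ ((fun i => γ i && z i) = z) := by
        constructor
        · intro h
          funext i
          by_cases hik : i = k
          · subst hik; rw [hγ, hzf]; rfl
          · have := congrFun h i
            rwa [Function.update_of_ne hik] at this
        · intro h
          funext i
          by_cases hik : i = k
          · subst hik; simp [hzf]
          · rw [Function.update_of_ne hik]; exact congrFun h i
      rw [if_neg (fun h : _ ∧ _ => hzk h.2), add_zero]
      by_cases hc : (fun i => γ i && z i) = z
      · rw [if_pos hc, if_pos (hiff.2 hc)]
      · rw [if_neg hc, if_neg (fun h => hc (hiff.1 h))]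
  rw [Finset.sum_congr rfl fun z _ => hsplit z, Finset.sum_add_distrib]
  have hsecond : (∑ z, if ((fun i => Function.update γ k true i && z i) = z ∧ z k = true)
        then F z else 0)
      = ∑ z, if (fun i => γ i && z i) = z then F (Function.update z k true) else 0 := by
    refine (Fintype.sum_bijective _ (flip_involutive (n := n) k).bijective _ _
      fun z => ?_).symm
    by_cases hzk : z k = true
    · have hng : ¬((fun i => γ i && z i) = z) := fun h => by
        rw [mask_k_false hγ h] at hzk; exact absurd hzk (by simp)
      rw [if_neg hng, if_neg]
      intro hcon
      have h2 := hcon.2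
      rw [Function.update_self, hzk] at h2
      exact absurd h2 (by simp)
    · have hzf : z k = false := by simpa using hzk
      simp only [hzf, Bool.not_false]
      by_cases hc : (fun i => γ i && z i) = z
      · rw [if_pos hc, if_pos ⟨(mask_cond_k hγ hzf).2 hc, by simp⟩]
      · rw [if_neg hc, if_neg (fun hcon => hc ((mask_cond_k hγ hzf).1 hcon.1))]
  rw [hsecond, ← Finset.sum_add_distrib]
  refine Finset.sum_congr rfl fun z _ => ?_
  by_cases hc : (fun i => γ i && z i) = z
  · rw [if_pos hc, if_pos hc, if_pos hc]
  · rw [if_neg hc, if_neg hc, if_neg hc, add_zero]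


lemma alg1 {a b c d : ℝ} (ha : 0 ≤ a) (hb : 0 ≤ b) (hc : 0 ≤ c) (hd : 0 ≤ d) :
    a * (b * c / (a * d)) ≤ b * c / d := by
  rcases ha.eq_or_lt with h0 | hap
  · rw [← h0, zero_mul]
    exact div_nonneg (mul_nonneg hb hc) hd
  · rcases hd.eq_or_lt with h0 | hdp
    · rw [← h0]; simp
    · rw [show a * (b * c / (a * d)) = b * c / d by field_simp]

lemma le_update_self {γ : Fin n → Bool} {k : Fin n} :
    ∀ i, γ i = true → Function.update γ k true i = true := by
  intro i hi
  by_cases hik : i = k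
  · subst hik; simp
  · rwa [Function.update_of_ne hik]

lemma T_le_one (hp : ∀ x, 0 ≤ p x) (hp1 : ∑ x, p x = 1)
    {β γ : Fin n → Bool} {k : Fin n}
    (hβγ : ∀ i, β i = true → γ i = true) (hβ : β k = false) (hγ : γ k = false) :
    (∑ x, p x * (q p γ x * q p (Function.update β k true) x /
        (q p (Function.update γ k true) x * q p β x))) ≤ 1 := by
  set γ' := Function.update γ k true with hγ'def
  set β' := Function.update β k true with hβ'def
  have hγγ' : ∀ i, γ i = true → γ' i = true := le_update_self
  have hβγ' : ∀ i, β i = true → γ' i = true := fun i hi => hγγ' i (hβγ i hi)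
  have hβ'γ' : ∀ i, β' i = true → γ' i = true := by
    intro i hi
    by_cases hik : i = k
    · subst hik; simp [hγ'def]
    · rw [hβ'def, Function.update_of_ne hik] at hi
      exact hβγ' i hi
  -- the ratio as a function
  set R : (Fin n → Bool) → ℝ := fun z => q p γ z * q p β' z / (q p γ' z * q p β z)
    with hRdef
  have hRcongr : ∀ x, R (fun i => γ' i && x i) = R x := by
    intro x
    have key : ∀ σ : Fin n → Bool, (∀ i, σ i = true → γ' i = true) →
        q p σ (fun i => γ' i && x i) = q p σ x := by
      intro σ hσ
      exact (q_congr fun i hi => by rw [hσ i hi, Bool.true_and]).symm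
    rw [hRdef]
    dsimp only
    rw [key γ hγγ', key γ' (fun i hi => hi), key β hβγ', key β' hβ'γ']
  have step1 : (∑ x, p x * R x)
      = ∑ z, if (fun i => γ' i && z i) = z then q p γ' z * R z else 0 := by
    have hx : ∀ x, p x * R x = ∑ z, if (fun i => γ' i && x i) = z then p x * R z else 0 := by
      intro x
      rw [Finset.sum_ite_eq univ (fun i => γ' i && x i) (fun z => p x * R z)]
      simp only [mem_univ, if_true]
      rw [hRcongr x]
    rw [Finset.sum_congr rfl fun x _ => hx x, Finset.sum_comm]
    refine Finset.sum_congr rfl fun z _ => ?_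
    have : ∀ x, (if (fun i => γ' i && x i) = z then p x * R z else 0)
        = (if (fun i => γ' i && x i) = z then p x else 0) * R z := by
      intro x; split <;> simp
    rw [Finset.sum_congr rfl fun x _ => this x, ← Finset.sum_mul, fiber_mass]
    split <;> simp
  rw [step1]
  have step2 : (∑ z, if (fun i => γ' i && z i) = z then q p γ' z * R z else 0)
      ≤ ∑ z, if (fun i => γ' i && z i) = z
          then q p γ z * q p β' z / q p β z else 0 := by
    refine Finset.sum_le_sum fun z _ => ?_
    split
    · rw [hRdef]
      exact alg1 (q_nonneg hp γ' z) (q_nonneg hp γ z) (q_nonneg hp β' z)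
        (q_nonneg hp β z)
    · exact le_refl 0
  refine le_trans step2 ?_
  rw [pair_split hγ (fun z => q p γ z * q p β' z / q p β z)]
  have step3 : (∑ z, if (fun i => γ i && z i) = z
      then q p γ z * q p β' z / q p β z
        + q p γ (Function.update z k true) * q p β' (Function.update z k true)
          / q p β (Function.update z k true) else 0)
      ≤ ∑ z, if (fun i => γ i && z i) = z then q p γ z else 0 := by
    refine Finset.sum_le_sum fun z _ => ?_
    by_cases hc : (fun i => γ i && z i) = z
    · rw [if_pos hc, if_pos hc]
      have hzk : z k = false := mask_k_false hγ hc
      have hupd : ∀ σ : Fin n → Bool, σ k = false →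
          q p σ (Function.update z k true) = q p σ z := by
        intro σ hσk
        refine (q_congr fun i hi => ?_).symm
        have hik : i ≠ k := fun h => by rw [h, hσk] at hi; exact absurd hi (by simp)
        rw [Function.update_of_ne hik]
      rw [hupd γ hγ, hupd β hβ]
      have hsplit : q p β' (Function.update z k false)
          + q p β' (Function.update z k true) = q p β z := q_split hβ
      rw [show Function.update z k false = z by
        rw [← hzk]; exact Function.update_eq_self k z] at hsplit
      rw [← add_div, ← mul_add, hsplit, mul_div_assoc]
      rcases (q_nonneg hp β z).eq_or_lt with h0 | hq
      · rw [← h0, div_zero, mul_zero]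
        exact q_nonneg hp γ z
      · rw [div_self (ne_of_gt hq), mul_one]
    · rw [if_neg hc, if_neg hc]
  refine le_trans step3 ?_
  rw [sum_q_mask hp1 γ]


lemma submod (hp : ∀ x, 0 ≤ p x) (hp1 : ∑ x, p x = 1) {β γ : Fin n → Bool} {k : Fin n}
    (hβγ : ∀ i, β i = true → γ i = true) (hβ : β k = false) (hγ : γ k = false) :
    Hq p (Function.update γ k true) - Hq p γ
      ≤ Hq p (Function.update β k true) - Hq p β := by
  set γ' := Function.update γ k true with hγ'def
  set β' := Function.update β k true with hβ'def
  have hlog2 : (0:ℝ) < Real.log 2 := Real.log_pos one_lt_two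
  have hT1 := T_le_one hp hp1 hβγ hβ hγ
  rw [← hγ'def, ← hβ'def] at hT1
  have key : (∑ x, (p x * Real.logb 2 (q p γ x) + p x * Real.logb 2 (q p β' x)
      - (p x * Real.logb 2 (q p γ' x) + p x * Real.logb 2 (q p β x)))) ≤ 0 := by
    have hper : ∀ x, p x * Real.logb 2 (q p γ x) + p x * Real.logb 2 (q p β' x)
        - (p x * Real.logb 2 (q p γ' x) + p x * Real.logb 2 (q p β x))
        ≤ (p x * (q p γ x * q p β' x / (q p γ' x * q p β x)) - p x) / Real.log 2 := by
      intro x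
      rcases (hp x).eq_or_lt with h0 | hpx
      · rw [← h0]; simp
      · have q1 : 0 < q p γ x := q_pos hp hpx
        have q2 : 0 < q p β' x := q_pos hp hpx
        have q3 : 0 < q p γ' x := q_pos hp hpx
        have q4 : 0 < q p β x := q_pos hp hpx
        have hr : 0 < q p γ x * q p β' x / (q p γ' x * q p β x) :=
          div_pos (mul_pos q1 q2) (mul_pos q3 q4)
        have hlb := Real.log_le_sub_one_of_pos hr
        have hlr : Real.log (q p γ x * q p β' x / (q p γ' x * q p β x))
            = Real.log (q p γ x) + Real.log (q p β' x)
              - (Real.log (q p γ' x) + Real.log (q p β x)) := by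
          rw [Real.log_div (by positivity) (by positivity),
            Real.log_mul (ne_of_gt q1) (ne_of_gt q2),
            Real.log_mul (ne_of_gt q3) (ne_of_gt q4)]
        have e1 : p x * Real.logb 2 (q p γ x) + p x * Real.logb 2 (q p β' x)
            - (p x * Real.logb 2 (q p γ' x) + p x * Real.logb 2 (q p β x))
            = (p x * Real.log (q p γ x) + p x * Real.log (q p β' x)
              - (p x * Real.log (q p γ' x) + p x * Real.log (q p β x))) / Real.log 2 := by
          simp only [Real.logb]; ring
        rw [e1]
        refine (div_le_div_iff_of_pos_right hlog2).mpr ?_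
        have h2 := mul_le_mul_of_nonneg_left hlb hpx.le
        have e2 : p x * Real.log (q p γ x * q p β' x / (q p γ' x * q p β x))
            = p x * Real.log (q p γ x) + p x * Real.log (q p β' x)
              - (p x * Real.log (q p γ' x) + p x * Real.log (q p β x)) := by
          rw [hlr]; ring
        nlinarith [h2, e2]
    calc (∑ x, (p x * Real.logb 2 (q p γ x) + p x * Real.logb 2 (q p β' x)
        - (p x * Real.logb 2 (q p γ' x) + p x * Real.logb 2 (q p β x))))
        ≤ ∑ x, (p x * (q p γ x * q p β' x / (q p γ' x * q p β x)) - p x) / Real.log 2 :=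
          Finset.sum_le_sum fun x _ => hper x
      _ = ((∑ x, p x * (q p γ x * q p β' x / (q p γ' x * q p β x))) - 1) / Real.log 2 := by
          rw [← Finset.sum_div, Finset.sum_sub_distrib, hp1]
      _ ≤ 0 := by
          rw [div_nonpos_iff]
          right
          exact ⟨by linarith, hlog2.le⟩
  simp only [Finset.sum_sub_distrib, Finset.sum_add_distrib] at key
  unfold Hq
  linarith


noncomputable def pre (τ : Fin n → Bool) (m : ℕ) : Fin n → Bool :=
  fun i => τ i && decide (i.val < m)

lemma pre_zero (τ : Fin n → Bool) : pre τ 0 = fun _ => false := by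
  funext i; simp [pre]

lemma pre_top (τ : Fin n → Bool) : pre τ n = τ := by
  funext i; simp [pre, i.isLt]

lemma Hq_telescope (hp1 : ∑ x, p x = 1) (τ : Fin n → Bool) :
    Hq p τ = ∑ k ∈ range n, (Hq p (pre τ (k+1)) - Hq p (pre τ k)) := by
  rw [Finset.sum_range_sub (fun m => Hq p (pre τ m)) n, pre_top, pre_zero,
    Hq_bot hp1, sub_zero]

lemma pre_succ_false {τ : Fin n → Bool} {k : ℕ} (hk : k < n)
    (h : τ ⟨k, hk⟩ = false) : pre τ (k+1) = pre τ k := by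
  funext i
  by_cases hik : i.val = k
  · have hi : i = ⟨k, hk⟩ := Fin.ext hik
    simp [pre, hi, h]
  · simp only [pre]
    rw [show decide (i.val < k+1) = decide (i.val < k) from
      decide_eq_decide.mpr (by omega)]

lemma pre_succ_true {τ : Fin n → Bool} {k : ℕ} (hk : k < n)
    (h : τ ⟨k, hk⟩ = true) :
    pre τ (k+1) = Function.update (pre τ k) ⟨k, hk⟩ true := by
  funext i
  by_cases hik : i = (⟨k, hk⟩ : Fin n)
  · subst hik
    simp [pre, h]
  · rw [Function.update_of_ne hik]
    simp only [pre]
    have hik' : i.val ≠ k := fun hc => hik (Fin.ext hc)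
    rw [show decide (i.val < k+1) = decide (i.val < k) from
      decide_eq_decide.mpr (by omega)]

lemma pre_le {τ σ : Fin n → Bool} (h : ∀ i, τ i = true → σ i = true) (m : ℕ) :
    ∀ i, pre τ m i = true → pre σ m i = true := by
  intro i hi
  simp only [pre, Bool.and_eq_true] at hi ⊢
  exact ⟨h i hi.1, hi.2⟩

lemma pre_k_false (τ : Fin n → Bool) {k : ℕ} (hk : k < n) :
    pre τ k ⟨k, hk⟩ = false := by
  simp [pre]

lemma W_sum_coord {u : ℝ} (k : Fin n) :
    (∑ σ' : Fin n → Bool, W u σ' * (if σ' k = true then (1:ℝ) else 0)) = u := by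
  have h1 : ∀ σ' : Fin n → Bool, W u σ' * (if σ' k = true then (1:ℝ) else 0)
      = ∏ i, ((if σ' i then u else 1-u) * (if i = k then (if σ' i then (1:ℝ) else 0) else 1)) := by
    intro σ'
    rw [Finset.prod_mul_distrib]
    congr 1
    rw [Finset.prod_ite_eq' univ k (fun i => if σ' i then (1:ℝ) else 0)]
    simp
  have h3 := sum_pi_prod (fun (i : Fin n) (b : Bool) => (if b then u else 1-u) *
    (if i = k then (if b then (1:ℝ) else 0) else 1))
  rw [Finset.sum_congr rfl fun σ' _ => h1 σ', h3]
  have h2 : ∀ i : Fin n, (∑ b : Bool, (if b then u else 1-u) *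
      (if i = k then (if b then (1:ℝ) else 0) else 1)) = if i = k then u else 1 := by
    intro i
    rw [Fintype.sum_bool]
    by_cases h : i = k <;> simp [h] <;> ring
  rw [Finset.prod_congr rfl fun i _ => h2 i,
    Finset.prod_ite_eq' univ k (fun _ => u)]
  simp

lemma shearer (hp : ∀ x, 0 ≤ p x) (hp1 : ∑ x, p x = 1)
    {u : ℝ} (hu0 : 0 ≤ u) (hu1 : u ≤ 1) (σ : Fin n → Bool) :
    u * Hq p σ ≤ ∑ σ' : Fin n → Bool, W u σ' * Hq p (fun i => σ i && σ' i) := by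
  have hRHS : (∑ σ' : Fin n → Bool, W u σ' * Hq p (fun i => σ i && σ' i))
      = ∑ k ∈ range n, ∑ σ' : Fin n → Bool, W u σ' *
          (Hq p (pre (fun i => σ i && σ' i) (k+1)) - Hq p (pre (fun i => σ i && σ' i) k)) := by
    rw [Finset.sum_congr rfl fun σ' _ => by
      rw [Hq_telescope hp1 (fun i => σ i && σ' i), Finset.mul_sum]]
    exact Finset.sum_comm
  rw [hRHS, Hq_telescope hp1 σ, Finset.mul_sum]
  refine Finset.sum_le_sum fun k hkr => ?_
  have hk : k < n := mem_range.1 hkr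
  by_cases hσk : σ ⟨k, hk⟩ = true
  · -- σ has coordinate k
    have hstep : ∀ σ' : Fin n → Bool, W u σ' *
        (if σ' ⟨k, hk⟩ = true
          then (Hq p (pre σ (k+1)) - Hq p (pre σ k)) else 0)
        ≤ W u σ' * (Hq p (pre (fun i => σ i && σ' i) (k+1))
            - Hq p (pre (fun i => σ i && σ' i) k)) := by
      intro σ'
      refine mul_le_mul_of_nonneg_left ?_ (W_nonneg hu0 hu1 σ')
      by_cases hσ'k : σ' ⟨k, hk⟩ = true
      · rw [if_pos hσ'k]
        have hτk : (fun i => σ i && σ' i) ⟨k, hk⟩ = true := by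
          dsimp only; rw [hσk, hσ'k]; rfl
        rw [pre_succ_true hk hσk, pre_succ_true hk hτk]
        exact submod hp hp1 (pre_le (fun i hi => by rw [Bool.and_eq_true] at hi; exact hi.1) k)
          (pre_k_false _ hk) (pre_k_false _ hk)
      · have hσ'f : σ' ⟨k, hk⟩ = false := by simpa using hσ'k
        rw [if_neg hσ'k]
        have hτk : (fun i => σ i && σ' i) ⟨k, hk⟩ = false := by
          dsimp only; rw [hσ'f, Bool.and_false]
        rw [pre_succ_false hk hτk, sub_self]
    refine le_trans ?_ (Finset.sum_le_sum fun σ' _ => hstep σ')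
    have : (∑ σ' : Fin n → Bool, W u σ' *
        (if σ' ⟨k, hk⟩ = true then (Hq p (pre σ (k+1)) - Hq p (pre σ k)) else 0))
        = (Hq p (pre σ (k+1)) - Hq p (pre σ k)) *
            ∑ σ' : Fin n → Bool, W u σ' * (if σ' ⟨k, hk⟩ = true then (1:ℝ) else 0) := by
      rw [Finset.mul_sum]
      refine Finset.sum_congr rfl fun σ' _ => ?_
      split <;> ring
    rw [this, W_sum_coord]
    ring_nf
    exact le_refl _
  · have hσf : σ ⟨k, hk⟩ = false := by simpa using hσk
    rw [pre_succ_false hk hσf, sub_self, mul_zero]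
    refine Finset.sum_nonneg fun σ' _ => ?_
    have hτk : (fun i => σ i && σ' i) ⟨k, hk⟩ = false := by
      dsimp only; rw [hσf, Bool.false_and]
    rw [pre_succ_false hk hτk, sub_self, mul_zero]


lemma conv_fiber (t u : ℝ) (a : Fin n → Bool) :
    (∑ σ : Fin n → Bool, ∑ σ' : Fin n → Bool, W t σ * W u σ' *
      (if (fun i => σ i && σ' i) = a then (1:ℝ) else 0)) = W (t*u) a := by
  have hind : ∀ σ σ' : Fin n → Bool, (if (fun i => σ i && σ' i) = a then (1:ℝ) else 0)
      = ∏ i, (if (σ i && σ' i) = a i then (1:ℝ) else 0) := by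
    intro σ σ'
    have hb := Finset.prod_boole (p := fun i => (σ i && σ' i) = a i)
      (s := (univ : Finset (Fin n))) (M₀ := ℝ)
    simp only [mem_univ, true_implies] at hb
    rw [hb]
    exact if_congr funext_iff rfl rfl
  have hsummand : ∀ σ σ' : Fin n → Bool, W t σ * W u σ' *
      (if (fun i => σ i && σ' i) = a then (1:ℝ) else 0)
      = ∏ i, ((if σ i then t else 1-t) *
          ((if σ' i then u else 1-u) * (if (σ i && σ' i) = a i then (1:ℝ) else 0))) := by
    intro σ σ'
    rw [hind σ σ', W, W, mul_assoc, ← Finset.prod_mul_distrib, ← Finset.prod_mul_distrib]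
  rw [Finset.sum_congr rfl fun σ _ => Finset.sum_congr rfl fun σ' _ => hsummand σ σ']
  have hinner : ∀ σ : Fin n → Bool,
      (∑ σ' : Fin n → Bool, ∏ i, ((if σ i then t else 1-t) *
          ((if σ' i then u else 1-u) * (if (σ i && σ' i) = a i then (1:ℝ) else 0))))
      = ∏ i, ∑ b' : Bool, ((if σ i then t else 1-t) *
          ((if b' then u else 1-u) * (if (σ i && b') = a i then (1:ℝ) else 0))) := by
    intro σ
    exact sum_pi_prod (fun (i : Fin n) (b : Bool) => (if σ i then t else 1-t) *
      ((if b then u else 1-u) * (if (σ i && b) = a i then (1:ℝ) else 0)))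
  rw [Finset.sum_congr rfl fun σ _ => hinner σ]
  have houter := sum_pi_prod (fun (i : Fin n) (b : Bool) => ∑ b' : Bool,
    ((if b then t else 1-t) * ((if b' then u else 1-u) *
      (if (b && b') = a i then (1:ℝ) else 0))))
  rw [houter]
  refine Finset.prod_congr rfl fun i _ => ?_
  rw [Fintype.sum_bool, Fintype.sum_bool, Fintype.sum_bool]
  by_cases ha : a i = true
  · simp [ha, W]
  · have ha' : a i = false := by simpa using ha
    simp [ha', W]
    ring


noncomputable def chi (x : Fin n → Bool) (y : Fin n → Option Bool) : ℝ :=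
  ∏ i, (if (y i).isSome then (if y i = some (x i) then (1:ℝ) else 0) else 1)

def sigY (y : Fin n → Option Bool) : Fin n → Bool := fun i => (y i).isSome

noncomputable def Q (p : (Fin n → Bool) → ℝ) (y : Fin n → Option Bool) : ℝ :=
  ∑ x, p x * chi x y

lemma becW_factor (t : ℝ) (x : Bool) (y : Option Bool) :
    becW t x y = (if y.isSome then t else 1-t) *
      (if y.isSome then (if y = some x then (1:ℝ) else 0) else 1) := by
  cases y with
  | none => simp [becW]
  | some b =>
    by_cases h : b = x
    · simp [becW, h]
    · simp [becW, h, Ne.symm h]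

lemma prod_becW (t : ℝ) (x : Fin n → Bool) (y : Fin n → Option Bool) :
    (∏ i, becW t (x i) (y i)) = W t (sigY y) * chi x y := by
  rw [W, chi, ← Finset.prod_mul_distrib]
  exact Finset.prod_congr rfl fun i _ => becW_factor t (x i) (y i)

lemma sum_becW_one (t : ℝ) (x : Fin n → Bool) :
    (∑ y : Fin n → Option Bool, ∏ i, becW t (x i) (y i)) = 1 := by
  have h := sum_pi_prod (fun (i : Fin n) (c : Option Bool) => becW t (x i) c)
  rw [h]
  have hone : ∀ i : Fin n, (∑ c : Option Bool, becW t (x i) c) = 1 := by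
    intro i
    rw [Fintype.sum_option, Fintype.sum_bool]
    by_cases h : x i = true
    · simp [becW, h]
    · have h' : x i = false := by simpa using h
      simp [becW, h']
  rw [Finset.prod_congr rfl fun i _ => hone i, Finset.prod_const_one]

lemma chi_eq (x : Fin n → Bool) (y : Fin n → Option Bool) :
    chi x y = if (∀ i, (y i).isSome = true → y i = some (x i)) then (1:ℝ) else 0 := by
  rw [chi]
  have hb := Finset.prod_boole (p := fun i => (y i).isSome = true → y i = some (x i))
    (s := (univ : Finset (Fin n))) (M₀ := ℝ)
  simp only [mem_univ, true_implies] at hb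
  rw [← hb]
  refine Finset.prod_congr rfl fun i _ => ?_
  by_cases hs : (y i).isSome = true
  · by_cases hy : y i = some (x i) <;> simp [hs, hy]
  · simp [hs]

lemma margR_eq (t : ℝ) (y : Fin n → Option Bool) :
    margR (fun xy : (Fin n → Bool) × (Fin n → Option Bool) =>
        p xy.1 * ∏ i, becW t (xy.1 i) (xy.2 i)) y
      = W t (sigY y) * Q p y := by
  unfold margR Q
  rw [Finset.mul_sum]
  refine Finset.sum_congr rfl fun x _ => ?_
  simp only []
  rw [prod_becW]
  ring

lemma margL_eq (t : ℝ) (x : Fin n → Bool) :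
    margL (fun xy : (Fin n → Bool) × (Fin n → Option Bool) =>
        p xy.1 * ∏ i, becW t (xy.1 i) (xy.2 i)) x = p x := by
  unfold margL
  simp only []
  rw [← Finset.mul_sum, sum_becW_one, mul_one]

lemma H2_margR (t : ℝ) :
    H2 (margR (fun xy : (Fin n → Bool) × (Fin n → Option Bool) =>
        p xy.1 * ∏ i, becW t (xy.1 i) (xy.2 i)))
      = (-∑ y, (W t (sigY y) * Q p y) * Real.logb 2 (W t (sigY y)))
        + (-∑ y, (W t (sigY y) * Q p y) * Real.logb 2 (Q p y)) := by
  unfold H2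
  rw [← neg_add, neg_inj, ← Finset.sum_add_distrib]
  refine Finset.sum_congr rfl fun y _ => ?_
  rw [margR_eq]
  by_cases hw : W t (sigY y) = 0
  · simp [hw]
  · by_cases hq : Q p y = 0
    · simp [hq]
    · rw [Real.logb_mul hw hq]; ring

lemma H2_joint (t : ℝ) :
    H2 (fun xy : (Fin n → Bool) × (Fin n → Option Bool) =>
        p xy.1 * ∏ i, becW t (xy.1 i) (xy.2 i))
      = H2 p + (-∑ y, (W t (sigY y) * Q p y) * Real.logb 2 (W t (sigY y))) := by
  unfold H2
  rw [Fintype.sum_prod_type]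
  have hterm : ∀ (x : Fin n → Bool) (y : Fin n → Option Bool),
      (p x * ∏ i, becW t (x i) (y i)) * Real.logb 2 (p x * ∏ i, becW t (x i) (y i))
      = (p x * ∏ i, becW t (x i) (y i)) * Real.logb 2 (p x)
        + (p x * ∏ i, becW t (x i) (y i)) * Real.logb 2 (W t (sigY y)) := by
    intro x y
    rw [prod_becW]
    by_cases hchi : chi x y = 0
    · simp [hchi]
    · have hchi1 : chi x y = 1 := by
        rw [chi_eq] at hchi ⊢
        by_cases hcond : ∀ i, (y i).isSome = true → y i = some (x i)
        · rw [if_pos hcond]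
        · rw [if_neg hcond] at hchi; exact absurd rfl hchi
      by_cases hp0 : p x = 0
      · simp [hp0]
      · by_cases hw : W t (sigY y) = 0
        · simp [hw]
        · rw [hchi1, mul_one, Real.logb_mul hp0 hw]
          ring
  simp only []
  rw [Finset.sum_congr rfl fun x _ => Finset.sum_congr rfl fun y _ => hterm x y]
  rw [Finset.sum_congr rfl fun x _ =>
    (Finset.sum_add_distrib (s := (univ : Finset (Fin n → Option Bool))))]
  rw [Finset.sum_add_distrib]
  have e1 : (∑ x : Fin n → Bool, ∑ y : Fin n → Option Bool,
      (p x * ∏ i, becW t (x i) (y i)) * Real.logb 2 (p x))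
      = ∑ x, p x * Real.logb 2 (p x) := by
    refine Finset.sum_congr rfl fun x _ => ?_
    rw [← Finset.sum_mul, ← Finset.mul_sum, sum_becW_one, mul_one]
  have e2 : (∑ x : Fin n → Bool, ∑ y : Fin n → Option Bool,
      (p x * ∏ i, becW t (x i) (y i)) * Real.logb 2 (W t (sigY y)))
      = ∑ y, (W t (sigY y) * Q p y) * Real.logb 2 (W t (sigY y)) := by
    rw [Finset.sum_comm]
    refine Finset.sum_congr rfl fun y _ => ?_
    rw [← Finset.sum_mul]
    congr 1
    rw [Q, Finset.mul_sum]
    refine Finset.sum_congr rfl fun x _ => ?_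
    rw [prod_becW]
    ring
  rw [e1, e2]
  ring


lemma MI_eq_B (t : ℝ) :
    MI (fun xy : (Fin n → Bool) × (Fin n → Option Bool) =>
        p xy.1 * ∏ i, becW t (xy.1 i) (xy.2 i))
      = -∑ y, (W t (sigY y) * Q p y) * Real.logb 2 (Q p y) := by
  unfold MI
  rw [H2_margR, H2_joint]
  have hL : H2 (margL (fun xy : (Fin n → Bool) × (Fin n → Option Bool) =>
      p xy.1 * ∏ i, becW t (xy.1 i) (xy.2 i))) = H2 p := by
    unfold H2
    exact neg_inj.mpr (Finset.sum_congr rfl fun x _ => by rw [margL_eq])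
  rw [hL]
  ring

noncomputable def HS (p : (Fin n → Bool) → ℝ) (σ : Fin n → Bool) : ℝ :=
  ∑ y : Fin n → Option Bool,
    (if sigY y = σ then -(Q p y * Real.logb 2 (Q p y)) else 0)

lemma B_group (t : ℝ) :
    (-∑ y, (W t (sigY y) * Q p y) * Real.logb 2 (Q p y))
      = ∑ σ : Fin n → Bool, W t σ * HS p σ := by
  have h1 : ∀ y : Fin n → Option Bool,
      -((W t (sigY y) * Q p y) * Real.logb 2 (Q p y))
      = ∑ σ : Fin n → Bool, (if sigY y = σ
          then W t σ * -(Q p y * Real.logb 2 (Q p y)) else 0) := by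
    intro y
    rw [Finset.sum_ite_eq univ (sigY y)
      (fun σ => W t σ * -(Q p y * Real.logb 2 (Q p y)))]
    simp only [mem_univ, if_true]
    ring
  rw [← Finset.sum_neg_distrib, Finset.sum_congr rfl fun y _ => h1 y, Finset.sum_comm]
  refine Finset.sum_congr rfl fun σ _ => ?_
  rw [HS, Finset.mul_sum]
  refine Finset.sum_congr rfl fun y _ => ?_
  split <;> ring

lemma sigY_yx (σ x : Fin n → Bool) :
    sigY (fun i => if σ i then some (x i) else none) = σ := by
  funext i
  by_cases h : σ i <;> simp [sigY, h]

lemma q_eq_Q (σ x : Fin n → Bool) :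
    q p σ x = Q p (fun i => if σ i then some (x i) else none) := by
  unfold q Q chi
  refine Finset.sum_congr rfl fun x' _ => ?_
  congr 1
  refine Finset.prod_congr rfl fun i _ => ?_
  by_cases h : σ i <;> simp [h, eq_comm]

lemma fiberY (σ : Fin n → Bool) (y : Fin n → Option Bool) :
    (∑ x, if y = (fun i => if σ i then some (x i) else none) then p x else 0)
      = if sigY y = σ then Q p y else 0 := by
  by_cases h : sigY y = σ
  · rw [if_pos h, Q]
    refine Finset.sum_congr rfl fun x _ => ?_
    rw [chi_eq]
    have hiff : (y = fun i => if σ i then some (x i) else none)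
        ↔ (∀ i, (y i).isSome = true → y i = some (x i)) := by
      constructor
      · intro he i hi
        rw [he] at hi ⊢
        by_cases hσ : σ i <;> simp [hσ] at hi ⊢
      · intro hall
        funext i
        by_cases hσ : σ i = true
        · have hsome : (y i).isSome = true := by
            have := congrFun h i
            rw [sigY] at this
            rw [this]; exact hσ
          rw [hall i hsome, if_pos hσ]
        · have hnone : (y i).isSome = false := by
            have := congrFun h i
            rw [sigY] at this
            rw [this]; simpa using hσ
          have hyn : y i = none := Option.not_isSome_iff_eq_none.1 (by simp [hnone])
          rw [hyn, if_neg hσ]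
    by_cases hc : y = fun i => if σ i then some (x i) else none
    · rw [if_pos hc, if_pos (hiff.1 hc), mul_one]
    · rw [if_neg hc, if_neg (fun hh => hc (hiff.2 hh)), mul_zero]
  · rw [if_neg h]
    refine Finset.sum_eq_zero fun x _ => ?_
    rw [if_neg]
    intro he
    exact h (by rw [he]; exact sigY_yx σ x)

lemma HS_eq_Hq (σ : Fin n → Bool) : HS p σ = Hq p σ := by
  have step1 : ∀ x : Fin n → Bool, p x * Real.logb 2 (q p σ x)
      = ∑ y : Fin n → Option Bool, (if y = (fun i => if σ i then some (x i) else none)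
          then p x * Real.logb 2 (Q p y) else 0) := by
    intro x
    rw [Finset.sum_ite_eq' univ (fun i => if σ i then some (x i) else none)
      (fun y => p x * Real.logb 2 (Q p y))]
    simp only [mem_univ, if_true]
    rw [q_eq_Q]
  rw [Hq, Finset.sum_congr rfl fun x _ => step1 x, Finset.sum_comm]
  have step3 : ∀ y : Fin n → Option Bool,
      (∑ x, if y = (fun i => if σ i then some (x i) else none)
          then p x * Real.logb 2 (Q p y) else 0)
      = (if sigY y = σ then Q p y else 0) * Real.logb 2 (Q p y) := by
    intro y
    rw [← fiberY σ y, Finset.sum_mul]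
    refine Finset.sum_congr rfl fun x _ => ?_
    split <;> ring
  rw [Finset.sum_congr rfl fun y _ => step3 y, HS, ← Finset.sum_neg_distrib]
  refine Finset.sum_congr rfl fun y _ => ?_
  split <;> ring

lemma MI_formula (t : ℝ) :
    MI (fun xy : (Fin n → Bool) × (Fin n → Option Bool) =>
        p xy.1 * ∏ i, becW t (xy.1 i) (xy.2 i))
      = ∑ σ : Fin n → Bool, W t σ * Hq p σ := by
  rw [MI_eq_B, B_group]
  exact Finset.sum_congr rfl fun σ _ => by rw [HS_eq_Hq]

end BEC

/-- For `Xⁿ` on `{0,1}ⁿ` sent through a memoryless BEC with survival probability `t`,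
the map `t ↦ I(Xⁿ;Yⁿ(t))/t` is non-increasing on `(0,1]`. -/
theorem bec_mi_ratio_monotone (n : ℕ) (p : (Fin n → Bool) → ℝ) (hp : IsPMF p)
    (t₁ t₂ : ℝ) (ht₁ : 0 < t₁) (h12 : t₁ ≤ t₂) (ht₂ : t₂ ≤ 1) :
    MI (fun xy : (Fin n → Bool) × (Fin n → Option Bool) =>
        p xy.1 * ∏ i, becW t₂ (xy.1 i) (xy.2 i)) / t₂ ≤
    MI (fun xy : (Fin n → Bool) × (Fin n → Option Bool) =>
        p xy.1 * ∏ i, becW t₁ (xy.1 i) (xy.2 i)) / t₁ := by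
  obtain ⟨hp0, hp1⟩ := hp
  have ht₂pos : 0 < t₂ := lt_of_lt_of_le ht₁ h12
  rw [BEC.MI_formula, BEC.MI_formula, div_le_div_iff₀ ht₂pos ht₁]
  set u : ℝ := t₁ / t₂ with hu
  have hu0 : 0 ≤ u := by positivity
  have hu1 : u ≤ 1 := by rw [hu, div_le_one ht₂pos]; exact h12
  have htu : t₂ * u = t₁ := by rw [hu]; field_simp
  have hconv : (∑ σ : Fin n → Bool, BEC.W t₁ σ * BEC.Hq p σ)
      = ∑ σ : Fin n → Bool, ∑ σ' : Fin n → Bool,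
          BEC.W t₂ σ * BEC.W u σ' * BEC.Hq p (fun i => σ i && σ' i) := by
    have h1 : ∀ σ σ' : Fin n → Bool,
        BEC.W t₂ σ * BEC.W u σ' * BEC.Hq p (fun i => σ i && σ' i)
        = ∑ a : Fin n → Bool, BEC.W t₂ σ * BEC.W u σ' *
            (if (fun i => σ i && σ' i) = a then (1:ℝ) else 0) * BEC.Hq p a := by
      intro σ σ'
      have h2 : ∀ a : Fin n → Bool, BEC.W t₂ σ * BEC.W u σ' *
          (if (fun i => σ i && σ' i) = a then (1:ℝ) else 0) * BEC.Hq p a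
          = (if (fun i => σ i && σ' i) = a
              then BEC.W t₂ σ * BEC.W u σ' * BEC.Hq p a else 0) := by
        intro a; split <;> ring
      rw [Finset.sum_congr rfl fun a _ => h2 a,
        Finset.sum_ite_eq univ (fun i => σ i && σ' i)
          (fun a => BEC.W t₂ σ * BEC.W u σ' * BEC.Hq p a)]
      simp
    rw [Finset.sum_congr rfl fun σ _ => Finset.sum_congr rfl fun σ' _ => h1 σ σ',
      Finset.sum_congr rfl fun σ _ => Finset.sum_comm, Finset.sum_comm]
    refine Finset.sum_congr rfl fun a _ => ?_
    have h3 : ∀ σ σ' : Fin n → Bool, BEC.W t₂ σ * BEC.W u σ' *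
        (if (fun i => σ i && σ' i) = a then (1:ℝ) else 0) * BEC.Hq p a
        = (BEC.W t₂ σ * BEC.W u σ' *
            (if (fun i => σ i && σ' i) = a then (1:ℝ) else 0)) * BEC.Hq p a := by
      intro σ σ'; ring
    rw [Finset.sum_congr rfl fun σ _ => Finset.sum_congr rfl fun σ' _ => h3 σ σ']
    rw [Finset.sum_congr rfl fun σ _ => (Finset.sum_mul _ _ _).symm, ← Finset.sum_mul,
      BEC.conv_fiber t₂ u a, htu]
  have hmain : u * (∑ σ : Fin n → Bool, BEC.W t₂ σ * BEC.Hq p σ)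
      ≤ ∑ σ : Fin n → Bool, BEC.W t₁ σ * BEC.Hq p σ := by
    rw [hconv, Finset.mul_sum]
    refine Finset.sum_le_sum fun σ _ => ?_
    have hsh := BEC.shearer hp0 hp1 hu0 hu1 σ
    have hW2 : 0 ≤ BEC.W t₂ σ := BEC.W_nonneg ht₂pos.le ht₂ σ
    calc u * (BEC.W t₂ σ * BEC.Hq p σ) = BEC.W t₂ σ * (u * BEC.Hq p σ) := by ring
      _ ≤ BEC.W t₂ σ * ∑ σ' : Fin n → Bool,
            BEC.W u σ' * BEC.Hq p (fun i => σ i && σ' i) :=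
          mul_le_mul_of_nonneg_left hsh hW2
      _ = ∑ σ' : Fin n → Bool, BEC.W t₂ σ * BEC.W u σ' *
            BEC.Hq p (fun i => σ i && σ' i) := by
          rw [Finset.mul_sum]
          exact Finset.sum_congr rfl fun σ' _ => by ring
  have h4 := mul_le_mul_of_nonneg_left hmain ht₂pos.le
  have h5 : t₂ * (u * ∑ σ : Fin n → Bool, BEC.W t₂ σ * BEC.Hq p σ)
      = t₁ * ∑ σ : Fin n → Bool, BEC.W t₂ σ * BEC.Hq p σ := by
    rw [← mul_assoc, htu]
  linarith
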